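/- arXiv:2510.23288 — 2 statements merged into one kernel-verified Lean document; each statement's English description precedes it below -/
import Mathlib

section
/- Let X = (V, E) be a finite graph, G a group, ψ an edge potential on X, ρ_in : G → GL(F_in) and ρ_out : G → GL(F_out) linear representations, and K : F_in → F_out a linear map intertwining them, i.e., K(ρ_in(g) w) = ρ_out(g) K(w) for all g ∈ G and w ∈ F_in. Fix edge weights w_{uv} > 0 for each edge and define the torsor convolution Φ : (V → F_in) → (V → F_out) by (Φ f)(v) = (1/c_v) Σ_{u ∼ v} w_{uv} K( ρ_in(ψ_{uv})⁻¹ f(u) ) when c_v := Σ_{u ∼ v} w_{uv} > 0, and (Φ f)(v) = K(f(v)) when v is isolated. Then Φ is gauge-equivariant: for any gauge transformation γ : V → G, writing ψ'_{uv} = γ_u⁻¹ ψ_{uv} γ_v, f'(v) = ρ_in(γ_v)⁻¹ f(v), and Φ' for the convolution built from ψ', one has (Φ' f')(v) = ρ_out(γ_v)⁻¹ (Φ f)(v) for every vertex v. -/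
/-- The torsor convolution layer: at a vertex `v` with positive total neighbor weight
`c v = Σ_{u ∼ v} w u v`, it outputs `(1/c v) Σ_{u ∼ v} (w u v) • K ((ρin (ψ u v))⁻¹ (f u))`;
at an isolated vertex it outputs `K (f v)`. -/
noncomputable def torsorConv {V : Type*} [Fintype V] [DecidableEq V]
    (X : SimpleGraph V) [DecidableRel X.Adj] {G : Type*} [Group G]
    {Fi Fo : Type*} [AddCommGroup Fi] [Module ℝ Fi] [AddCommGroup Fo] [Module ℝ Fo]
    (ψ : V → V → G) (w : V → V → ℝ)
    (ρin : G →* (Fi ≃ₗ[ℝ] Fi)) (K : Fi →ₗ[ℝ] Fo) (f : V → Fi) (v : V) : Fo :=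
  if 0 < ∑ u ∈ X.neighborFinset v, w u v then
    (∑ u ∈ X.neighborFinset v, w u v)⁻¹ •
      ∑ u ∈ X.neighborFinset v, w u v • K ((ρin (ψ u v))⁻¹ (f u))
  else K (f v)

/-- The torsor convolution layer is gauge-equivariant: for any gauge
transformation `γ : V → G`, with `ψ' u v = γ u⁻¹ * ψ u v * γ v` and
`f' v = (ρin (γ v))⁻¹ (f v)`, the convolution `Φ'` built from `ψ'` satisfies
`(Φ' f') v = (ρout (γ v))⁻¹ ((Φ f) v)` at every vertex `v`. -/
theorem torsorConv_gauge_equivariant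
    {V : Type*} [Fintype V] [DecidableEq V]
    (X : SimpleGraph V) [DecidableRel X.Adj]
    {G : Type*} [Group G]
    {Fi Fo : Type*} [AddCommGroup Fi] [Module ℝ Fi] [AddCommGroup Fo] [Module ℝ Fo]
    (ψ : V → V → G) (hψ : ∀ u v : V, X.Adj u v → ψ u v = (ψ v u)⁻¹)
    (ρin : G →* (Fi ≃ₗ[ℝ] Fi)) (ρout : G →* (Fo ≃ₗ[ℝ] Fo))
    (K : Fi →ₗ[ℝ] Fo) (hK : ∀ (g : G) (x : Fi), K (ρin g x) = ρout g (K x))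
    (w : V → V → ℝ) (hwpos : ∀ u v : V, X.Adj u v → 0 < w u v)
    (hwsymm : ∀ u v : V, w u v = w v u)
    (γ : V → G) (ψ' : V → V → G)
    (hψ' : ∀ u v : V, ψ' u v = (γ u)⁻¹ * ψ u v * γ v)
    (f f' : V → Fi) (hf' : ∀ v : V, f' v = (ρin (γ v))⁻¹ (f v)) :
    ∀ v : V, torsorConv X ψ' w ρin K f' v =
      (ρout (γ v))⁻¹ (torsorConv X ψ w ρin K f v) := by
  intro v
  have key : ∀ u : V, K ((ρin (ψ' u v))⁻¹ (f' u)) =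
      (ρout (γ v))⁻¹ (K ((ρin (ψ u v))⁻¹ (f u))) := by
    intro u
    have h1 : (ρin (ψ' u v))⁻¹ (f' u)
        = ρin ((γ v)⁻¹ * (ψ u v)⁻¹) (f u) := by
      rw [hψ' u v, hf' u, ← map_inv, ← map_inv]
      have hmul : ∀ (a b : Fi ≃ₗ[ℝ] Fi) (x : Fi), (a * b) x = a (b x) := fun _ _ _ => rfl
      have hinv : ∀ (a : Fi ≃ₗ[ℝ] Fi) (x : Fi), a (a⁻¹ x) = x := fun a x => a.apply_symm_apply x
      rw [← hmul, ← map_mul]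
      congr 2
      group
    rw [h1, hK, map_mul]
    rw [show (ρin (ψ u v))⁻¹ (f u) = ρin (ψ u v)⁻¹ (f u) from by rw [map_inv]]
    rw [hK, map_inv]
    rfl
  unfold torsorConv
  simp only [key]
  split
  · rw [map_smul, map_sum]
    congr 1
    exact Finset.sum_congr rfl fun u _ => (map_smul _ _ _).symm
  · rw [hf', ← map_inv, hK, map_inv]
end

section
/- Let X = (V, E) be a finite graph, G a group, ψ an edge potential on X, ρ_in : G → GL(F_in) and ρ_out : G → GL(F_out) linear representations, K : F_in → F_out an intertwiner, and Φ the torsor convolution built from symmetric positive edge weights w_{uv}. If f : V → F_in satisfies the synchronization condition f(u) = ρ_in(ψ_{uv}) f(v) for every edge (u,v), then (Φ f)(v) = K(f(v)) for every vertex v, and Φ f satisfies the synchronization condition for ρ_out, i.e., (Φ f)(u) = ρ_out(ψ_{uv}) (Φ f)(v) for every edge (u,v). -/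
/-- The torsor convolution preserves synchronized assignments (global
sections): if `f` is synchronized for `ρin`, then `(Φ f) v = K (f v)` at every vertex,
and `Φ f` is synchronized for `ρout`. -/
theorem torsorConv_preserves_sections
    {V : Type*} [Fintype V] [DecidableEq V]
    (X : SimpleGraph V) [DecidableRel X.Adj]
    {G : Type*} [Group G]
    {Fi Fo : Type*} [AddCommGroup Fi] [Module ℝ Fi] [AddCommGroup Fo] [Module ℝ Fo]
    (ψ : V → V → G) (hψ : ∀ u v : V, X.Adj u v → ψ u v = (ψ v u)⁻¹)
    (ρin : G →* (Fi ≃ₗ[ℝ] Fi)) (ρout : G →* (Fo ≃ₗ[ℝ] Fo))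
    (K : Fi →ₗ[ℝ] Fo) (hK : ∀ (g : G) (x : Fi), K (ρin g x) = ρout g (K x))
    (w : V → V → ℝ) (hwpos : ∀ u v : V, X.Adj u v → 0 < w u v)
    (hwsymm : ∀ u v : V, w u v = w v u)
    (f : V → Fi) (hf : ∀ u v : V, X.Adj u v → f u = ρin (ψ u v) (f v)) :
    (∀ v : V, torsorConv X ψ w ρin K f v = K (f v)) ∧
      (∀ u v : V, X.Adj u v →
        torsorConv X ψ w ρin K f u = ρout (ψ u v) (torsorConv X ψ w ρin K f v)) := by
  have h1 : ∀ v : V, torsorConv X ψ w ρin K f v = K (f v) := by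
    intro v
    unfold torsorConv
    split
    · next hpos =>
      have hterm : ∀ u ∈ X.neighborFinset v,
          w u v • K ((ρin (ψ u v))⁻¹ (f u)) = w u v • K (f v) := by
        intro u hu
        rw [SimpleGraph.mem_neighborFinset] at hu
        have := hf u v hu.symm
        rw [this]
        congr 1
        congr 1
        exact (ρin (ψ u v)).symm_apply_apply (f v)
      rw [Finset.sum_congr rfl hterm, ← Finset.sum_smul, smul_smul,
        inv_mul_cancel₀ (ne_of_gt hpos), one_smul]
    · rfl
  refine ⟨h1, fun u v huv => ?_⟩
  rw [h1 u, h1 v, hf u v huv, hK]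
end
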